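/- An n-dimensional evolution algebra E over a field F is nilpotent if and only if there exists a natural basis {e_1, …, e_n} of E for which the matrix of structural constants A = (a_{ij}) is strictly upper triangular, i.e. a_{ij} = 0 whenever i ≥ j. -/

import Mathlib

variable {F : Type*} [Field F] {A : Type*} [AddCommGroup A] [Module F A]

def mulSub (mul : A →ₗ[F] A →ₗ[F] A) (S T : Submodule F A) : Submodule F A :=
  Submodule.span F {z : A | ∃ x ∈ S, ∃ y ∈ T, mul x y = z}

/-- The powers `E^k`: `E^1 = E` and `E^k = Σ_{i=1}^{k-1} E^i E^{k-i}`. -/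
def powSeq (mul : A →ₗ[F] A →ₗ[F] A) : ℕ → Submodule F A
  | 0 => ⊤
  | 1 => ⊤
  | k + 2 => ⨆ i : Fin (k + 1), mulSub mul (powSeq mul (i + 1)) (powSeq mul (k + 1 - i))
  termination_by n => n
  decreasing_by
  all_goals (have := i.isLt; omega)

/-- A basis is natural if the product of distinct basis vectors vanishes. -/
def IsNaturalBasis {ι : Type*} (mul : A →ₗ[F] A →ₗ[F] A) (e : Module.Basis ι F A) : Prop :=
  ∀ i j, i ≠ j → mul (e i) (e j) = 0

section Aux

variable (mul : A →ₗ[F] A →ₗ[F] A)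

lemma mem_mulSub {S T : Submodule F A} {x y : A} (hx : x ∈ S) (hy : y ∈ T) :
    mul x y ∈ mulSub mul S T :=
  Submodule.subset_span ⟨x, hx, y, hy, rfl⟩

lemma mulSub_le {S T W : Submodule F A} (h : ∀ x ∈ S, ∀ y ∈ T, mul x y ∈ W) :
    mulSub mul S T ≤ W := by
  rw [mulSub, Submodule.span_le]
  rintro z ⟨x, hx, y, hy, rfl⟩
  exact h x hx y hy

lemma mulSub_mono {S S' T T' : Submodule F A} (hS : S ≤ S') (hT : T ≤ T') :
    mulSub mul S T ≤ mulSub mul S' T' :=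
  mulSub_le mul fun x hx y hy => mem_mulSub mul (hS hx) (hT hy)

lemma powSeq_zero : powSeq mul 0 = ⊤ := by rw [powSeq]

lemma powSeq_one : powSeq mul 1 = ⊤ := by rw [powSeq]

lemma powSeq_add_two (k : ℕ) :
    powSeq mul (k + 2) =
      ⨆ i : Fin (k + 1), mulSub mul (powSeq mul (i + 1)) (powSeq mul (k + 1 - i)) := by
  rw [powSeq]

lemma mul_mem_powSeq_two (x y : A) : mul x y ∈ powSeq mul 2 := by
  rw [show (2 : ℕ) = 0 + 2 from rfl, powSeq_add_two]
  refine Submodule.mem_iSup_of_mem (0 : Fin 1) ?_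
  exact mem_mulSub mul (by simp [powSeq_one]) (by simp [powSeq_one])

lemma mulSub_powSeq_top_le (m : ℕ) (hm : 1 ≤ m) :
    mulSub mul (powSeq mul m) ⊤ ≤ powSeq mul (m + 1) := by
  obtain ⟨k, rfl⟩ : ∃ k, m = k + 1 := ⟨m - 1, by omega⟩
  rw [show k + 1 + 1 = k + 2 from rfl, powSeq_add_two]
  refine le_trans ?_ (le_iSup _ (Fin.last k))
  simp only [Fin.val_last]
  rw [show k + 1 - k = 1 by omega, powSeq_one]

lemma powSeq_succ_le : ∀ k, powSeq mul (k + 1) ≤ powSeq mul k := by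
  intro k
  induction k using Nat.strong_induction_on with
  | _ k ih =>
    match k with
    | 0 => rw [powSeq_zero]; exact le_top
    | 1 => rw [powSeq_one]; exact le_top
    | (k + 2) =>
      rw [show k + 2 + 1 = (k + 1) + 2 from rfl, powSeq_add_two, powSeq_add_two]
      refine iSup_le fun i => ?_
      by_cases hik : (i : ℕ) ≤ k
      · refine le_trans ?_ (le_iSup _ (⟨(i : ℕ), by omega⟩ : Fin (k + 1)))
        refine mulSub_mono mul le_rfl ?_
        have h1 : (k + 1) + 1 - (i : ℕ) = (k + 1 - (i : ℕ)) + 1 := by omega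
        rw [h1]
        exact ih (k + 1 - (i : ℕ)) (by omega)
      · have hi : (i : ℕ) = k + 1 := by have := i.isLt; omega
        refine le_trans ?_ (le_iSup _ (Fin.last k))
        simp only [Fin.val_last]
        rw [hi, show k + 1 + 1 - (k + 1) = 1 by omega, show k + 1 - k = 1 by omega]
        exact mulSub_mono mul (ih (k + 1) (by omega)) le_rfl

lemma powSeq_antitone : Antitone (powSeq mul) :=
  antitone_nat_of_succ_le (powSeq_succ_le mul)

variable {n : ℕ} (e : Module.Basis (Fin n) F A)

lemma mul_basis_right (he : IsNaturalBasis mul e) (j : Fin n) (y : A) :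
    mul (e j) y = e.repr y j • mul (e j) (e j) := by
  conv_lhs => rw [← e.linearCombination_repr y]
  rw [Finsupp.linearCombination_apply, Finsupp.sum, map_sum]
  rw [Finset.sum_eq_single j]
  · simp
  · intro k _ hkj
    rw [map_smul, he j k (Ne.symm hkj), smul_zero]
  · intro hj
    simp [Finsupp.notMem_support_iff.1 hj]

lemma sq_step (hcomm : ∀ x y : A, mul x y = mul y x) (he : IsNaturalBasis mul e)
    {i j : Fin n} (hij : e.repr (mul (e i) (e i)) j ≠ 0)
    {m : ℕ} (hm : 2 ≤ m) (h : mul (e i) (e i) ∈ powSeq mul m) :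
    mul (e j) (e j) ∈ powSeq mul (m + 1) := by
  have key : mul (e j) (mul (e i) (e i))
      = e.repr (mul (e i) (e i)) j • mul (e j) (e j) := mul_basis_right mul e he j _
  have mem : mul (e j) (mul (e i) (e i)) ∈ powSeq mul (m + 1) := by
    refine mulSub_powSeq_top_le mul m (by omega) ?_
    rw [hcomm]
    exact mem_mulSub mul h (Submodule.mem_top)
  rw [key] at mem
  have := Submodule.smul_mem (powSeq mul (m + 1)) (e.repr (mul (e i) (e i)) j)⁻¹ mem
  rwa [inv_smul_smul₀ hij] at this

lemma sq_chain (hcomm : ∀ x y : A, mul x y = mul y x) (he : IsNaturalBasis mul e)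
    {p q : Fin n}
    (h : Relation.TransGen (fun i j => e.repr (mul (e i) (e i)) j ≠ 0) p q) :
    ∀ m, 2 ≤ m → mul (e p) (e p) ∈ powSeq mul m →
      ∃ m', m < m' ∧ mul (e q) (e q) ∈ powSeq mul m' := by
  induction h with
  | single h =>
    intro m hm hp
    exact ⟨m + 1, by omega, sq_step mul e hcomm he h hm hp⟩
  | tail _ hbq ih =>
    intro m hm hp
    obtain ⟨m', hm', hb⟩ := ih m hm hp
    exact ⟨m' + 1, by omega, sq_step mul e hcomm he hbq (by omega) hb⟩

lemma no_cycle (hcomm : ∀ x y : A, mul x y = mul y x) (he : IsNaturalBasis mul e)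
    {N : ℕ} (hN : powSeq mul N = ⊥) (i : Fin n) :
    ¬ Relation.TransGen (fun i j => e.repr (mul (e i) (e i)) j ≠ 0) i i := by
  intro hcyc
  have grow : ∀ k : ℕ, ∃ m, k ≤ m ∧ 2 ≤ m ∧ mul (e i) (e i) ∈ powSeq mul m := by
    intro k
    induction k with
    | zero => exact ⟨2, by omega, by omega, mul_mem_powSeq_two mul _ _⟩
    | succ k ihk =>
      obtain ⟨m, h1, h2, h3⟩ := ihk
      obtain ⟨m', hm', h⟩ := sq_chain mul e hcomm he hcyc m h2 h3
      exact ⟨m', by omega, by omega, h⟩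
  obtain ⟨m, hm1, _, hm3⟩ := grow N
  have hbot : powSeq mul m ≤ ⊥ := hN ▸ powSeq_antitone mul hm1
  have hz : mul (e i) (e i) = 0 := by simpa using hbot hm3
  obtain ⟨j, hj, -⟩ := (Relation.TransGen.head'_iff).1 hcyc
  rw [hz] at hj
  simp at hj

end Aux

/-- An `n`-dimensional evolution algebra `E` over a field `F` is nilpotent
(`E^N = 0` for some `N`) iff it has a natural basis whose matrix of structural constants
`a_{ij} = (e.repr (e i * e i)) j` is strictly upper triangular, i.e. `a_{ij} = 0` whenever
`i ≥ j`. -/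
theorem nilpotent_iff_structural_matrix_strictly_upper_triangular
    (n : ℕ) (hdim : Module.finrank F A = n)
    (mul : A →ₗ[F] A →ₗ[F] A) (hcomm : ∀ x y : A, mul x y = mul y x)
    (hEvol : ∃ e : Module.Basis (Fin n) F A, IsNaturalBasis mul e) :
    (∃ N : ℕ, powSeq mul N = ⊥) ↔
      ∃ e : Module.Basis (Fin n) F A, IsNaturalBasis mul e ∧
        ∀ i j : Fin n, j ≤ i → e.repr (mul (e i) (e i)) j = 0 := by
  constructor
  · rintro ⟨N, hN⟩
    obtain ⟨e, he⟩ := hEvol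
    set r : Fin n → Fin n → Prop := fun i j => e.repr (mul (e i) (e i)) j ≠ 0 with hr
    have hirr : ∀ i, ¬ Relation.TransGen r i i := fun i => no_cycle mul e hcomm he hN i
    haveI : IsIrrefl (Fin n) (Relation.TransGen r) := ⟨hirr⟩
    have wf : WellFounded (Relation.TransGen r) :=
      Finite.wellFounded_of_trans_of_irrefl _
    haveI hwfi : IsWellFounded (Fin n) (Relation.TransGen r) := ⟨wf⟩
    set ρ : Fin n → Ordinal := IsWellFounded.rank (Relation.TransGen r) with hρ
    have hρlt : ∀ {i j}, r i j → ρ i < ρ j := fun h =>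
      IsWellFounded.rank_lt_of_rel (Relation.TransGen.single h)
    set key : Fin n → Ordinal ×ₗ (Fin n) := fun i => toLex (ρ i, i) with hkey
    have keyinj : Function.Injective key := by
      intro a b hab
      have : (ρ a, a) = (ρ b, b) := congrArg ofLex hab
      exact (Prod.mk.injEq _ _ _ _ ▸ this).2
    have keylt : ∀ {i j}, r i j → key i < key j := by
      intro i j h
      rw [hkey]
      exact Prod.Lex.lt_iff.2 (Or.inl (hρlt h))
    set σ : Equiv.Perm (Fin n) := (Tuple.sort key)⁻¹ with hσ
    have smono : StrictMono (key ∘ Tuple.sort key) :=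
      (Tuple.monotone_sort key).strictMono_of_injective
        (keyinj.comp (Equiv.injective _))
    have hσlt : ∀ {i j}, r i j → σ i < σ j := by
      intro i j h
      have h1 : (key ∘ Tuple.sort key) (σ i) = key i := by
        simp [hσ, Function.comp]
      have h2 : (key ∘ Tuple.sort key) (σ j) = key j := by
        simp [hσ, Function.comp]
      have := keylt h
      rw [← h1, ← h2] at this
      exact smono.lt_iff_lt.1 this
    refine ⟨e.reindex σ, ?_, ?_⟩
    · intro i j hij
      simp only [Module.Basis.reindex_apply]
      exact he _ _ (fun h => hij (by simpa using congrArg σ h))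
    · intro i j hji
      by_contra h
      have h' : r (σ.symm i) (σ.symm j) := by
        simp only [Module.Basis.reindex_apply] at h
        rw [Module.Basis.repr_reindex_apply] at h
        exact h
      have := hσlt h'
      simp only [Equiv.apply_symm_apply] at this
      omega
  · rintro ⟨e, he, hUT⟩
    set V : ℕ → Submodule F A :=
      fun m => Submodule.span F (e '' {j : Fin n | m ≤ (j : ℕ)}) with hV
    have hV0 : V 0 = ⊤ := by
      rw [hV]
      simp only [Nat.zero_le, Set.setOf_true, Set.image_univ]
      exact e.span_eq
    have hVmono : ∀ {a b : ℕ}, a ≤ b → V b ≤ V a := by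
      intro a b hab
      exact Submodule.span_mono (Set.image_mono (fun j hj => le_trans hab hj))
    have hsq : ∀ i : Fin n, mul (e i) (e i) ∈ V ((i : ℕ) + 1) := by
      intro i
      rw [hV]
      rw [Module.Basis.mem_span_image]
      intro k hk
      simp only [Finset.mem_coe, Finsupp.mem_support_iff] at hk
      simp only [Set.mem_setOf_eq]
      by_contra hik
      exact hk (hUT i k (by omega))
    have B1 : ∀ (m : ℕ) (x : A), x ∈ V m → ∀ y : A, mul x y ∈ V (m + 1) := by
      intro m x hx
      refine Submodule.span_induction ?_ ?_ ?_ ?_ hx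
      · rintro x ⟨j, hj, rfl⟩ y
        rw [mul_basis_right mul e he j y]
        exact Submodule.smul_mem _ _ (hVmono (by exact Nat.add_le_add_right hj 1) (hsq j))
      · intro y
        simp only [map_zero, LinearMap.zero_apply]
        exact Submodule.zero_mem _
      · intro x₁ x₂ _ _ h1 h2 y
        rw [map_add, LinearMap.add_apply]
        exact Submodule.add_mem _ (h1 y) (h2 y)
      · intro c x₁ _ h1 y
        rw [map_smul, LinearMap.smul_apply]
        exact Submodule.smul_mem _ _ (h1 y)
    have PT : ∀ t k : ℕ, 2 ^ t + 1 ≤ k → powSeq mul k ≤ V t := by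
      intro t
      induction t with
      | zero =>
        intro k hk
        obtain ⟨k', rfl⟩ : ∃ k', k = k' + 2 := ⟨k - 2, by omega⟩
        rw [powSeq_add_two]
        refine iSup_le fun i => mulSub_le mul fun x hx y hy => ?_
        exact hVmono (by omega) (B1 0 x (hV0 ▸ Submodule.mem_top) y)
      | succ t iht =>
        intro k hk
        obtain ⟨k', rfl⟩ : ∃ k', k = k' + 2 := ⟨k - 2, by have := Nat.one_le_two_pow (n := t + 1); omega⟩
        rw [powSeq_add_two]
        refine iSup_le fun i => mulSub_le mul fun x hx y hy => ?_
        have hi := i.isLt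
        have hcases : 2 ^ t + 1 ≤ (i : ℕ) + 1 ∨ 2 ^ t + 1 ≤ k' + 1 - (i : ℕ) := by
          have h2 : 2 ^ (t + 1) = 2 ^ t + 2 ^ t := by ring
          omega
        rcases hcases with hc | hc
        · exact B1 t x (iht _ hc hx) y
        · rw [hcomm]
          exact B1 t y (iht _ hc hy) x
    refine ⟨2 ^ n + 1, le_bot_iff.1 ?_⟩
    refine le_trans (PT n _ le_rfl) (Submodule.span_le.2 ?_)
    rintro x ⟨j, hj, rfl⟩
    simp only [Set.mem_setOf_eq] at hj
    exact absurd hj (Nat.not_le.mpr j.isLt)
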